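/- Let F be a finite field with q elements and let r ≥ 2 be an integer. Let B be the family of all r-element subsets of F^r \ {0} that are bases of the vector space F^r. Then B is D_r(2,q+2)-free and D_r(q,q+2)-free (as a family of r-element subsets of the ground set F^r \ {0}). -/

import Mathlib

/-- A family `F` of finsets of `α` is `D_r(s,t)`-free on the ground set `V`: there is no
`(r,s,t)`-daisy with stem `S ⊆ V` and petal-set `T ⊆ V` all of whose petals lie in `F`. -/
def IsDaisyFreeOn {α : Type*} [DecidableEq α] (V : Set α) (r s t : ℕ)
    (F : Finset (Finset α)) : Prop :=
  ¬ ∃ S T : Finset α, ↑S ⊆ V ∧ ↑T ⊆ V ∧ S.card = r - s ∧ T.card = t ∧ Disjoint S T ∧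
      ∀ X ⊆ T, X.card = s → S ∪ X ∈ F

section Aux
variable {K : Type*} [Field K] {V : Type*} [AddCommGroup V] [Module K V] [DecidableEq V]

lemma aux_not_mem_span_diff (A : Finset V)
    (h : LinearIndependent K (fun x : (A : Set V) => (x : V))) {x : V} (hx : x ∈ A) :
    x ∉ Submodule.span K ((A \ {x} : Finset V) : Set V) := by
  have h2 := h.notMem_span_image (s := {j : (A : Set V) | (j : V) ≠ x})
    (x := ⟨x, hx⟩) (by simp)
  have himg : (fun x : (A : Set V) => (x : V)) '' {j : (A : Set V) | (j : V) ≠ x}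
      = ((A \ {x} : Finset V) : Set V) := by
    ext y
    simp only [Finset.coe_sdiff, Finset.coe_singleton, Set.mem_diff, Set.mem_singleton_iff,
      Set.mem_image, Set.mem_setOf_eq, Finset.mem_coe, Subtype.exists]
    constructor
    · rintro ⟨z, hz, hne, rfl⟩; exact ⟨hz, hne⟩
    · rintro ⟨hy, hne⟩; exact ⟨y, hy, hne, rfl⟩
  rwa [himg] at h2

lemma aux_pair (A : Finset V)
    (h : LinearIndependent K (fun x : (A : Set V) => (x : V))) {x y : V}
    (hx : x ∈ A) (hy : y ∈ A) (hxy : x ≠ y) {α β : K} (hαβ : ¬ (α = 0 ∧ β = 0))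
    (hw : α • x + β • y ∈ Submodule.span K ((A \ {x, y} : Finset V) : Set V)) : False := by
  have key : ∀ x y : V, x ∈ A → y ∈ A → x ≠ y → ∀ α β : K, α ≠ 0 →
      α • x + β • y ∈ Submodule.span K ((A \ {x, y} : Finset V) : Set V) → False := by
    intro x y hx hy hxy α β hα hw
    have hxs : x ∈ Submodule.span K ((A \ {x} : Finset V) : Set V) := by
      have hsub : Submodule.span K ((A \ {x, y} : Finset V) : Set V)
          ≤ Submodule.span K ((A \ {x} : Finset V) : Set V) := by
        apply Submodule.span_mono
        intro z hz
        simp only [Finset.coe_sdiff, Set.mem_diff, Finset.mem_coe, Finset.coe_singleton,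
          Set.mem_singleton_iff, Finset.coe_insert, Set.mem_insert_iff] at hz ⊢
        exact ⟨hz.1, fun hzx => hz.2 (Or.inl hzx)⟩
      have hys : y ∈ Submodule.span K ((A \ {x} : Finset V) : Set V) := by
        apply Submodule.subset_span
        simp [Finset.mem_sdiff, hy, Ne.symm hxy]
      have heq : x = α⁻¹ • (α • x + β • y) - (α⁻¹ * β) • y := by
        rw [smul_add, smul_smul, inv_mul_cancel₀ hα, one_smul, mul_smul]
        abel
      have hmem : α⁻¹ • (α • x + β • y) - (α⁻¹ * β) • y
          ∈ Submodule.span K ((A \ {x} : Finset V) : Set V) :=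
        Submodule.sub_mem _ (Submodule.smul_mem _ _ (hsub hw)) (Submodule.smul_mem _ _ hys)
      rwa [← heq] at hmem
    exact aux_not_mem_span_diff A h hx hxs
  rcases eq_or_ne α 0 with hα | hα
  · have hβ : β ≠ 0 := fun hβ => hαβ ⟨hα, hβ⟩
    refine key y x hy hx hxy.symm β α hβ ?_
    rw [add_comm] at hw
    have hxyswap : ({y, x} : Finset V) = {x, y} := by ext z; simp [or_comm]
    rwa [hxyswap]
  · exact key x y hx hy hxy α β hα hw

lemma aux_pigeonhole [Fintype K] {ι : Type*} [DecidableEq ι] (T : Finset ι)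
    (hT : T.card = Fintype.card K + 2) (f g : ι → K)
    (h : ∀ i ∈ T, ∀ j ∈ T, i ≠ j → f i * g j ≠ f j * g i) : False := by
  classical
  have hinj : Set.InjOn (fun i => if g i = 0 then (none : Option K) else some (f i * (g i)⁻¹)) T := by
    intro i hi j hj hij
    by_contra hne
    refine h i hi j hj hne ?_
    by_cases hgi : g i = 0 <;> by_cases hgj : g j = 0 <;>
      simp only [hgi, hgj, if_pos, if_neg, if_true, if_false, reduceIte] at hij
    · rw [hgi, hgj]; ring
    · exact absurd hij (by simp [hgj])
    · exact absurd hij (by simp [hgi])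
    · have := Option.some_injective _ hij
      field_simp at this
      linear_combination this
  have hcard := Finset.card_le_card_of_injOn
    (fun i => if g i = 0 then (none : Option K) else some (f i * (g i)⁻¹))
    (fun i _ => Finset.mem_univ _) hinj
  rw [hT] at hcard
  simp only [Finset.card_univ, Fintype.card_option] at hcard
  omega

lemma aux_mem_span (A0 : Finset V) (b : Module.Basis (A0 : Set V) K V) (hb : ∀ i, b i = ↑i)
    (w : V) (D : Finset V)
    (hzero : ∀ i : (A0 : Set V), (↑i : V) ∉ D → b.repr w i = 0) :
    w ∈ Submodule.span K (D : Set V) := by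
  have h1 : w ∈ Submodule.span K (b '' {i : (A0 : Set V) | (↑i : V) ∈ D}) := by
    rw [Module.Basis.mem_span_image]
    intro i hi
    simp only [Finset.mem_coe, Finsupp.mem_support_iff] at hi
    by_contra hcon
    exact hi (hzero i hcon)
  refine Submodule.span_le.mpr ?_ h1
  rintro y ⟨i, hi, rfl⟩
  rw [hb]
  exact Submodule.subset_span hi

lemma aux_solve {a b c d : K} (h : a * d = c * b) :
    ∃ α β : K, ¬(α = 0 ∧ β = 0) ∧ α * a + β * c = 0 ∧ α * b + β * d = 0 := by
  by_cases hca : c = 0 ∧ a = 0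
  · by_cases hdb : d = 0 ∧ b = 0
    · exact ⟨1, 0, by simp, by simp [hca.2], by simp [hdb.2]⟩
    · exact ⟨d, -b, by simp only [neg_eq_zero]; tauto, by rw [neg_mul]; linear_combination h,
        by ring⟩
  · exact ⟨c, -a, by simp only [neg_eq_zero]; tauto, by ring,
      by rw [neg_mul]; linear_combination -h⟩

end Aux

/-- Let `K` be a finite field with `q` elements and `r ≥ 2`. The family `B` of all
`r`-element subsets of `K^r \ {0}` that are bases of `K^r` is both `D_r(2,q+2)`-free and
`D_r(q,q+2)`-free on the ground set `K^r \ {0}`. -/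
theorem bases_daisy_free (K : Type*) [Field K] [Fintype K] [DecidableEq K]
    (q : ℕ) (hq : q = Fintype.card K) (r : ℕ) (hr : 2 ≤ r)
    (B : Finset (Finset (Fin r → K)))
    (hB : ∀ A : Finset (Fin r → K),
      A ∈ B ↔ A.card = r ∧ (0 : Fin r → K) ∉ A ∧
        LinearIndependent K (fun x : (A : Set (Fin r → K)) => (x : Fin r → K)) ∧
        Submodule.span K (A : Set (Fin r → K)) = ⊤) :
    IsDaisyFreeOn {v : Fin r → K | v ≠ 0} r 2 (q + 2) B ∧
    IsDaisyFreeOn {v : Fin r → K | v ≠ 0} r q (q + 2) B := by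
  have hq2 : 2 ≤ q := by rw [hq]; exact Fintype.one_lt_card
  constructor
  · rintro ⟨S, T, -, -, hScard, hTcard, hST, hall⟩
    have hTS : ∀ z ∈ T, z ∉ S := fun z hz hzS => Finset.disjoint_left.mp hST hzS hz
    obtain ⟨t1, ht1, t2, ht2, h12⟩ := Finset.one_lt_card.mp (by omega : 1 < T.card)
    have hX0T : ({t1, t2} : Finset (Fin r → K)) ⊆ T :=
      Finset.insert_subset ht1 (Finset.singleton_subset_iff.mpr ht2)
    obtain ⟨hA0card, -, li0, sp0⟩ := (hB _).mp (hall _ hX0T (Finset.card_pair h12))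
    have hspge : ⊤ ≤ Submodule.span K (Set.range
        (fun x : ((S ∪ {t1, t2} : Finset (Fin r → K)) : Set (Fin r → K)) => (x : Fin r → K))) := by
      rw [Subtype.range_coe, sp0]
    let b := Module.Basis.mk li0 hspge
    have hb : ∀ i, b i = ↑i := fun i => Module.Basis.mk_apply li0 hspge i
    have ht1A : t1 ∈ S ∪ ({t1, t2} : Finset (Fin r → K)) :=
      Finset.mem_union_right _ (by simp)
    have ht2A : t2 ∈ S ∪ ({t1, t2} : Finset (Fin r → K)) :=
      Finset.mem_union_right _ (by simp)
    refine aux_pigeonhole T (by rw [hTcard, hq])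
      (fun x => b.repr x ⟨t1, Finset.mem_coe.mpr ht1A⟩)
      (fun x => b.repr x ⟨t2, Finset.mem_coe.mpr ht2A⟩) ?_
    intro t ht t' ht' htt' heq
    obtain ⟨α, β, hαβ, h1, h2⟩ := aux_solve heq
    have hwspan : α • t + β • t' ∈ Submodule.span K (S : Set (Fin r → K)) := by
      apply aux_mem_span _ b hb _ S
      intro i hiS
      have hiA : (↑i : Fin r → K) ∈ S ∪ ({t1, t2} : Finset (Fin r → K)) := Finset.mem_coe.mp i.2
      have hi12 : (↑i : Fin r → K) = t1 ∨ (↑i : Fin r → K) = t2 := by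
        rcases Finset.mem_union.mp hiA with h | h
        · exact absurd h hiS
        · simpa using h
      have hrepr : b.repr (α • t + β • t') i = α * b.repr t i + β * b.repr t' i := by
        simp [map_add, map_smul]
      rcases hi12 with h | h
      · rw [hrepr, show i = (⟨t1, Finset.mem_coe.mpr ht1A⟩ :
          ((S ∪ {t1, t2} : Finset (Fin r → K)) : Set (Fin r → K))) from Subtype.ext h]
        exact h1
      · rw [hrepr, show i = (⟨t2, Finset.mem_coe.mpr ht2A⟩ :
          ((S ∪ {t1, t2} : Finset (Fin r → K)) : Set (Fin r → K))) from Subtype.ext h]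
        exact h2
    have htT' : ({t, t'} : Finset (Fin r → K)) ⊆ T :=
      Finset.insert_subset ht (Finset.singleton_subset_iff.mpr ht')
    obtain ⟨-, -, li1, -⟩ := (hB _).mp (hall _ htT' (Finset.card_pair htt'))
    refine aux_pair (S ∪ {t, t'}) li1 (Finset.mem_union_right _ (by simp))
      (Finset.mem_union_right _ (by simp)) htt' hαβ ?_
    have hset : (S ∪ {t, t'}) \ {t, t'} = S := by
      ext z
      simp only [Finset.mem_sdiff, Finset.mem_union, Finset.mem_insert, Finset.mem_singleton]
      constructor
      · rintro ⟨h | h, hn⟩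
        · exact h
        · exact absurd h hn
      · intro hz
        refine ⟨Or.inl hz, ?_⟩
        rintro (rfl | rfl)
        · exact hTS z ht hz
        · exact hTS z ht' hz
    rw [hset]
    exact hwspan
  · rintro ⟨S, T, -, -, hScard, hTcard, hST, hall⟩
    have hTS : ∀ z ∈ T, z ∉ S := fun z hz hzS => Finset.disjoint_left.mp hST hzS hz
    obtain ⟨T0, hT0T, hT0card⟩ := Finset.exists_subset_card_eq (s := T) (n := q) (by omega)
    obtain ⟨hA0card, -, li0, sp0⟩ := (hB _).mp (hall T0 hT0T hT0card)
    have hdisj0 : Disjoint S T0 := hST.mono_right hT0T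
    have hcard0 : (S ∪ T0).card = S.card + T0.card := Finset.card_union_of_disjoint hdisj0
    have hqr : q ≤ r := by
      rw [hA0card, hScard, hT0card] at hcard0
      omega
    have hT0S : ∀ z ∈ T0, z ∉ S := fun z hz => hTS z (hT0T hz)
    -- the two leftover elements u, v
    have hTdiff : (T \ T0).card = 2 := by
      rw [Finset.card_sdiff_of_subset hT0T, hTcard, hT0card]; omega
    obtain ⟨u, hu, v, hv, huv⟩ := Finset.one_lt_card.mp (by omega : 1 < (T \ T0).card)
    obtain ⟨huT, huT0⟩ := Finset.mem_sdiff.mp hu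
    obtain ⟨hvT, hvT0⟩ := Finset.mem_sdiff.mp hv
    have hclass : ∀ z ∈ T, z = u ∨ z = v ∨ z ∈ T0 := by
      intro z hz
      by_cases hz0 : z ∈ T0
      · exact Or.inr (Or.inr hz0)
      · have hsub : ({u, v} : Finset (Fin r → K)) ⊆ T \ T0 :=
          Finset.insert_subset hu (Finset.singleton_subset_iff.mpr hv)
        have heq2 : ({u, v} : Finset (Fin r → K)) = T \ T0 :=
          Finset.eq_of_subset_of_card_le hsub (by rw [hTdiff, Finset.card_pair huv])
        have : z ∈ ({u, v} : Finset (Fin r → K)) := by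
          rw [heq2]; exact Finset.mem_sdiff.mpr ⟨hz, hz0⟩
        simpa using (by simpa using this : z = u ∨ z = v) |>.imp id Or.inl
    -- basis from S ∪ T0
    have hspge : ⊤ ≤ Submodule.span K (Set.range
        (fun x : ((S ∪ T0 : Finset (Fin r → K)) : Set (Fin r → K)) => (x : Fin r → K))) := by
      rw [Subtype.range_coe, sp0]
    let b := Module.Basis.mk li0 hspge
    have hb : ∀ i, b i = ↑i := fun i => Module.Basis.mk_apply li0 hspge i
    have hmemA0 : ∀ t ∈ T0, t ∈ S ∪ T0 := fun t ht => Finset.mem_union_right _ ht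
    have huS : u ∉ S := hTS u huT
    have hvS : v ∉ S := hTS v hvT
    -- key1 : a single vanishing coordinate of u or v gives a contradiction
    have key1 : ∀ t, ∀ ht : t ∈ T0, ∀ w, w ∈ T → w ∉ T0 →
        b.repr w ⟨t, Finset.mem_coe.mpr (hmemA0 t ht)⟩ = 0 → False := by
      intro t ht w hwT hwT0 hcoord
      have hwspan : w ∈ Submodule.span K (((S ∪ T0) \ {t} : Finset (Fin r → K)) :
          Set (Fin r → K)) := by
        apply aux_mem_span _ b hb w _
        intro i hi
        have hiA : (↑i : Fin r → K) ∈ S ∪ T0 := Finset.mem_coe.mp i.2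
        have hit : (↑i : Fin r → K) = t := by
          by_contra hne
          exact hi (Finset.mem_sdiff.mpr ⟨hiA, by simpa using hne⟩)
        rw [show i = (⟨t, Finset.mem_coe.mpr (hmemA0 t ht)⟩ :
          ((S ∪ T0 : Finset (Fin r → K)) : Set (Fin r → K))) from Subtype.ext hit]
        exact hcoord
      have hwS : w ∉ S := hTS w hwT
      have hX1T : (T0 \ {t}) ∪ {w} ⊆ T := by
        apply Finset.union_subset (subset_trans (Finset.sdiff_subset) hT0T)
        exact Finset.singleton_subset_iff.mpr hwT
      have hX1card : ((T0 \ {t}) ∪ {w}).card = q := by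
        rw [Finset.card_union_of_disjoint (by
          simp only [Finset.disjoint_singleton_right, Finset.mem_sdiff]
          exact fun h => hwT0 h.1),
          Finset.card_sdiff_of_subset (Finset.singleton_subset_iff.mpr ht), hT0card,
          Finset.card_singleton, Finset.card_singleton]
        omega
      obtain ⟨-, -, li1, -⟩ := (hB _).mp (hall _ hX1T hX1card)
      refine aux_not_mem_span_diff _ li1
        (Finset.mem_union_right _ (Finset.mem_union_right _ (Finset.mem_singleton_self w))) ?_
      have hset : (S ∪ ((T0 \ {t}) ∪ {w})) \ {w} = (S ∪ T0) \ {t} := by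
        ext z
        simp only [Finset.mem_sdiff, Finset.mem_union, Finset.mem_singleton]
        constructor
        · rintro ⟨h | (⟨hz0, hzt⟩ | rfl), hn⟩
          · refine ⟨Or.inl h, fun hzt => ?_⟩
            exact hT0S z (hzt ▸ ht) h
          · exact ⟨Or.inr hz0, hzt⟩
          · exact absurd rfl hn
        · rintro ⟨h | h, hzt⟩
          · refine ⟨Or.inl h, fun hzw => ?_⟩
            exact hwS (hzw ▸ h)
          · refine ⟨Or.inr (Or.inl ⟨h, hzt⟩), fun hzw => ?_⟩
            exact hwT0 (hzw ▸ h)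
      rw [hset]
      exact hwspan
    -- the pair functions
    refine aux_pigeonhole T (by rw [hTcard, hq])
      (fun x => if x = u then 1 else if x = v then 0 else
        (if hx : x ∈ ((S ∪ T0 : Finset (Fin r → K)) : Set (Fin r → K)) then b.repr u ⟨x, hx⟩
          else 0))
      (fun x => if x = u then 0 else if x = v then 1 else
        (if hx : x ∈ ((S ∪ T0 : Finset (Fin r → K)) : Set (Fin r → K)) then b.repr v ⟨x, hx⟩
          else 0)) ?_
    intro t ht t' ht' htt' heq
    have hval : ∀ z, ∀ hz : z ∈ T0,
        (if z = u then (1:K) else if z = v then 0 else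
          (if hx : z ∈ ((S ∪ T0 : Finset (Fin r → K)) : Set (Fin r → K)) then b.repr u ⟨z, hx⟩
            else 0)) = b.repr u ⟨z, Finset.mem_coe.mpr (hmemA0 z hz)⟩ ∧
        (if z = u then (0:K) else if z = v then 1 else
          (if hx : z ∈ ((S ∪ T0 : Finset (Fin r → K)) : Set (Fin r → K)) then b.repr v ⟨z, hx⟩
            else 0)) = b.repr v ⟨z, Finset.mem_coe.mpr (hmemA0 z hz)⟩ := by
      intro z hz
      have hzu : z ≠ u := fun h => huT0 (h ▸ hz)
      have hzv : z ≠ v := fun h => hvT0 (h ▸ hz)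
      rw [if_neg hzu, if_neg hzv, if_neg hzu, if_neg hzv,
        dif_pos (Finset.mem_coe.mpr (hmemA0 z hz)), dif_pos (Finset.mem_coe.mpr (hmemA0 z hz))]
      exact ⟨rfl, rfl⟩
    rcases hclass t ht with rfl | rfl | ht0
    · rcases hclass t' ht' with rfl | rfl | ht0'
      · exact htt' rfl
      · rw [if_pos rfl, if_pos rfl, if_neg (Ne.symm huv), if_pos rfl, if_neg (Ne.symm huv),
          if_pos rfl] at heq
        simpa using heq
      · -- t = u, t' ∈ T0 : coordinate of v at t' vanishes
        rw [if_pos rfl, if_pos rfl, (hval t' ht0').1, (hval t' ht0').2] at heq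
        refine key1 t' ht0' v hvT hvT0 ?_
        rw [mul_zero, one_mul] at heq
        exact heq
    · rcases hclass t' ht' with rfl | rfl | ht0'
      · -- t = v, t' = u
        simp [htt', Ne.symm htt'] at heq
      · exact htt' rfl
      · -- t = v, t' ∈ T0
        rw [(hval t' ht0').1, (hval t' ht0').2, if_neg (Ne.symm huv), if_pos rfl,
          if_neg (Ne.symm huv), if_pos rfl, zero_mul, mul_one] at heq
        exact key1 t' ht0' u huT huT0 heq.symm
    · rcases hclass t' ht' with rfl | rfl | ht0'
      · -- t ∈ T0, t' = u
        rw [(hval t ht0).1, (hval t ht0).2, if_pos rfl, if_pos rfl, mul_zero, one_mul] at heq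
        exact key1 t ht0 v hvT hvT0 heq.symm
      · -- t ∈ T0, t' = v
        rw [(hval t ht0).1, (hval t ht0).2, if_neg (Ne.symm huv), if_pos rfl,
          if_neg (Ne.symm huv), if_pos rfl, mul_one, zero_mul] at heq
        exact key1 t ht0 u huT huT0 heq
      · -- main case : t, t' ∈ T0
        rw [(hval t ht0).1, (hval t ht0).2, (hval t' ht0').1, (hval t' ht0').2] at heq
        have htu : t ≠ u := fun h => huT0 (h ▸ ht0)
        have htv : t ≠ v := fun h => hvT0 (h ▸ ht0)
        have ht'u : t' ≠ u := fun h => huT0 (h ▸ ht0')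
        have ht'v : t' ≠ v := fun h => hvT0 (h ▸ ht0')
        have htS : t ∉ S := hT0S t ht0
        have ht'S : t' ∉ S := hT0S t' ht0'
        obtain ⟨α, β, hαβ, h1, h2⟩ := aux_solve
          (a := b.repr u ⟨t, Finset.mem_coe.mpr (hmemA0 t ht0)⟩)
          (c := b.repr v ⟨t, Finset.mem_coe.mpr (hmemA0 t ht0)⟩)
          (b := b.repr u ⟨t', Finset.mem_coe.mpr (hmemA0 t' ht0')⟩)
          (d := b.repr v ⟨t', Finset.mem_coe.mpr (hmemA0 t' ht0')⟩)
          (by linear_combination heq)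
        have hwspan : α • u + β • v ∈ Submodule.span K
            (((S ∪ T0) \ {t, t'} : Finset (Fin r → K)) : Set (Fin r → K)) := by
          apply aux_mem_span _ b hb _ _
          intro i hi
          have hiA : (↑i : Fin r → K) ∈ S ∪ T0 := Finset.mem_coe.mp i.2
          have hit : (↑i : Fin r → K) = t ∨ (↑i : Fin r → K) = t' := by
            by_contra hne
            push_neg at hne
            exact hi (Finset.mem_sdiff.mpr ⟨hiA, by simp [hne.1, hne.2]⟩)
          have hrepr : b.repr (α • u + β • v) i = α * b.repr u i + β * b.repr v i := by
            simp [map_add, map_smul]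
          rcases hit with h | h
          · rw [hrepr, show i = (⟨t, Finset.mem_coe.mpr (hmemA0 t ht0)⟩ :
              ((S ∪ T0 : Finset (Fin r → K)) : Set (Fin r → K))) from Subtype.ext h]
            exact h1
          · rw [hrepr, show i = (⟨t', Finset.mem_coe.mpr (hmemA0 t' ht0')⟩ :
              ((S ∪ T0 : Finset (Fin r → K)) : Set (Fin r → K))) from Subtype.ext h]
            exact h2
        have hpairT0 : ({t, t'} : Finset (Fin r → K)) ⊆ T0 :=
          Finset.insert_subset ht0 (Finset.singleton_subset_iff.mpr ht0')
        have hX1T : (T0 \ {t, t'}) ∪ {u, v} ⊆ T := by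
          apply Finset.union_subset (subset_trans Finset.sdiff_subset hT0T)
          exact Finset.insert_subset huT (Finset.singleton_subset_iff.mpr hvT)
        have hX1card : ((T0 \ {t, t'}) ∪ {u, v}).card = q := by
          rw [Finset.card_union_of_disjoint (by
            simp only [Finset.disjoint_right, Finset.mem_insert, Finset.mem_singleton,
              Finset.mem_sdiff]
            rintro z (rfl | rfl) ⟨hz, -⟩
            · exact huT0 hz
            · exact hvT0 hz),
            Finset.card_sdiff_of_subset hpairT0, hT0card, Finset.card_pair htt', Finset.card_pair huv]
          omega
        obtain ⟨-, -, li1, -⟩ := (hB _).mp (hall _ hX1T hX1card)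
        refine aux_pair _ li1
          (Finset.mem_union_right _ (Finset.mem_union_right _ (by simp)))
          (Finset.mem_union_right _ (Finset.mem_union_right _ (by simp))) huv hαβ ?_
        have hset : (S ∪ ((T0 \ {t, t'}) ∪ {u, v})) \ {u, v} = (S ∪ T0) \ {t, t'} := by
          ext z
          simp only [Finset.mem_sdiff, Finset.mem_union, Finset.mem_singleton,
            Finset.mem_insert]
          constructor
          · rintro ⟨h | (⟨hz0, hzt⟩ | (rfl | rfl)), hn⟩
            · refine ⟨Or.inl h, ?_⟩
              rintro (rfl | rfl)
              · exact htS h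
              · exact ht'S h
            · exact ⟨Or.inr hz0, hzt⟩
            · exact absurd (Or.inl rfl) hn
            · exact absurd (Or.inr rfl) hn
          · rintro ⟨h | h, hzt⟩
            · refine ⟨Or.inl h, ?_⟩
              rintro (rfl | rfl)
              · exact huS h
              · exact hvS h
            · refine ⟨Or.inr (Or.inl ⟨h, hzt⟩), ?_⟩
              rintro (rfl | rfl)
              · exact huT0 h
              · exact hvT0 h
        rw [hset]
        exact hwspan
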